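/- For each fixed integer k ≥ 0 and all n ≥ 1, the graph Z_{n,k} has diameter at most n/(k+1) + 2^k. -/

import Mathlib

open SimpleGraph

/-- `κ(n)`: `0` for `n ≤ 1`, and `max{1, ⌈log₂ n − 2 log₂ log₂ n⌉}` for `n ≥ 2`. -/
noncomputable def kappa (n : ℕ) : ℕ :=
  if n ≤ 1 then 0
  else max 1 (Int.toNat ⌈Real.logb 2 (n : ℝ) - 2 * Real.logb 2 (Real.logb 2 (n : ℝ))⌉)

/-- XOR the first `k` bits with the last `k` bits of a binary string of length `n`. -/
def phiAux (n k : ℕ) (x : Fin n → ZMod 2) : Fin n → ZMod 2 :=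
  fun i => if h : i.val < k ∧ n - k + i.val < n then x i + x ⟨n - k + i.val, h.2⟩ else x i

/-- The permutation `φ` on `Z₂ⁿ`. -/
noncomputable def phi (n : ℕ) : (Fin n → ZMod 2) → (Fin n → ZMod 2) := phiAux n (kappa n)

/-- The Z-cube `H_n`, a graph on the binary strings of length `n`.  Bit `0` is the
"first" bit; `Fin.tail x` is the string `x` with its first bit removed. -/
noncomputable def Zcube : (n : ℕ) → SimpleGraph (Fin n → ZMod 2)
  | 0 => ⊥
  | (n + 1) =>
    { Adj := fun x y =>
        (x 0 = y 0 ∧ (Zcube n).Adj (Fin.tail x) (Fin.tail y)) ∨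
        (x 0 ≠ y 0 ∧ (Fin.tail y = phi n (Fin.tail x) ∨ Fin.tail x = phi n (Fin.tail y))),
      symm := by
        constructor
        rintro x y (⟨h1, h2⟩ | ⟨h1, h2⟩)
        · exact Or.inl ⟨h1.symm, h2.symm⟩
        · exact Or.inr ⟨h1.symm, h2.symm⟩
      loopless := by
        constructor
        rintro x (⟨h1, h2⟩ | ⟨h1, h2⟩)
        · exact (Zcube n).loopless.irrefl _ h2
        · exact h1 rfl }
/-- `σ_n = Σ_{j ∈ S(n)} j / κ(j)²`, where `S(n) = {j ≤ n : κ(j) = κ(j−1)+1}`. -/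
noncomputable def sigmaZ (n : ℕ) : ℝ :=
  ∑ j ∈ (Finset.range (n + 1)).filter (fun j => kappa j = kappa (j - 1) + 1),
    (j : ℝ) / (kappa j : ℝ) ^ 2

/-- The last `k` bits of a binary string of length `n` (for `k ≤ n`). -/
def lastBits (k n : ℕ) (v : Fin n → ZMod 2) : Fin k → ZMod 2 :=
  fun i => if h : n - k + i.val < n then v ⟨n - k + i.val, h⟩ else 0

/-- A walk in `H_n` is `k`-robust if every binary string of length `k` occurs as the
last `k` bits of some vertex of the walk. -/
def IsRobustWalk (k : ℕ) {n : ℕ} {x y : Fin n → ZMod 2} (W : (Zcube n).Walk x y) : Prop :=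
  ∀ z : Fin k → ZMod 2, ∃ v ∈ W.support, lastBits k n v = z

/-- The permutation `φ_k` on `Z₂ⁿ`. -/
def phiK (k n : ℕ) (x : Fin n → ZMod 2) : Fin n → ZMod 2 :=
  if n ≤ k then x
  else if n ≤ 2 * k then
    fun i => if h : i.val < n - k ∧ k + i.val < n then x i + x ⟨k + i.val, h.2⟩ else x i
  else
    fun i => if h : i.val < k ∧ n - k + i.val < n then x i + x ⟨n - k + i.val, h.2⟩ else x i

/-- The Z-cube `Z_{n,k}`. -/
def ZcubeK (k : ℕ) : (n : ℕ) → SimpleGraph (Fin n → ZMod 2)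
  | 0 => ⊥
  | (n + 1) =>
    { Adj := fun x y =>
        (x 0 = y 0 ∧ (ZcubeK k n).Adj (Fin.tail x) (Fin.tail y)) ∨
        (x 0 ≠ y 0 ∧ (Fin.tail y = phiK k n (Fin.tail x) ∨ Fin.tail x = phiK k n (Fin.tail y))),
      symm := by
        constructor
        rintro x y (⟨h1, h2⟩ | ⟨h1, h2⟩)
        · exact Or.inl ⟨h1.symm, h2.symm⟩
        · exact Or.inr ⟨h1.symm, h2.symm⟩
      loopless := by
        constructor
        rintro x (⟨h1, h2⟩ | ⟨h1, h2⟩)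
        · exact (ZcubeK k n).loopless.irrefl _ h2
        · exact h1 rfl }

/-- The subgraph of `H_n` consisting of the cross edges, i.e. the edges between the
two copies `0H_{n−1}` and `1H_{n−1}` (edges whose endpoints differ in the first bit). -/
noncomputable def crossSubgraph (n : ℕ) : (Zcube n).Subgraph where
  verts := Set.univ
  Adj x y := ∃ h : 0 < n, (Zcube n).Adj x y ∧ x ⟨0, h⟩ ≠ y ⟨0, h⟩
  adj_sub := by rintro x y ⟨h, h1, h2⟩; exact h1
  edge_vert := by intro x y _; trivial
  symm := by constructor; rintro x y ⟨h, h1, h2⟩; exact ⟨h, h1.symm, h2.symm⟩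

/-- A graph is Hamiltonian connected if any two distinct vertices are joined by a
Hamiltonian path. -/
def HamiltonianConnected {V : Type*} [DecidableEq V] (G : SimpleGraph V) : Prop :=
  ∀ x y : V, x ≠ y → ∃ p : G.Walk x y, p.IsHamiltonian

/-- The graph obtained from two disjoint copies of `G` by adding the perfect matching
`(u, false) ∼ (ψ u, true)` given by a bijection `ψ`. -/
def matchingJoin {V : Type*} (G : SimpleGraph V) (ψ : V ≃ V) : SimpleGraph (V × Bool) where
  Adj a b := (a.2 = b.2 ∧ G.Adj a.1 b.1) ∨
    (a.2 = false ∧ b.2 = true ∧ b.1 = ψ a.1) ∨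
    (a.2 = true ∧ b.2 = false ∧ a.1 = ψ b.1)
  symm := by
    constructor
    rintro ⟨u, i⟩ ⟨v, j⟩ (⟨h1, h2⟩ | ⟨h1, h2, h3⟩ | ⟨h1, h2, h3⟩)
    · exact Or.inl ⟨h1.symm, h2.symm⟩
    · exact Or.inr (Or.inr ⟨h2, h1, h3⟩)
    · exact Or.inr (Or.inl ⟨h2, h1, h3⟩)
  loopless := by
    constructor
    rintro ⟨u, i⟩ (⟨h1, h2⟩ | ⟨h1, h2, h3⟩ | ⟨h1, h2, h3⟩)
    · exact G.loopless.irrefl _ h2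
    · simp_all
    · simp_all

namespace ZKproof

/-- The "move at level `p`" operation on binary strings of length `n`. -/
def mv (k n p : ℕ) (v : Fin n → ZMod 2) : Fin n → ZMod 2 := fun i =>
  if (i : ℕ) = p then v i + 1
  else if h : p < (i : ℕ) ∧ (i : ℕ) ≤ p + k ∧ (i : ℕ) + k < n then
    v i + v ⟨(i : ℕ) + max k (n - 1 - k - p), by omega⟩
  else v i

lemma mv_tail (k n p : ℕ) (v : Fin (n+1) → ZMod 2) :
    Fin.tail (mv k (n+1) (p+1) v) = mv k n p (Fin.tail v) := by
  funext i
  simp only [Fin.tail, mv, Fin.val_succ]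
  have e1 : ((i : ℕ) + 1 = p + 1) ↔ ((i : ℕ) = p) := by omega
  by_cases h1 : (i : ℕ) = p
  · simp [h1]
  · rw [if_neg (by omega), if_neg h1]
    by_cases h2 : p < (i : ℕ) ∧ (i : ℕ) ≤ p + k ∧ (i : ℕ) + k < n
    · rw [dif_pos (by omega : p + 1 < (i:ℕ)+1 ∧ (i:ℕ)+1 ≤ p+1+k ∧ (i:ℕ)+1+k < n+1), dif_pos h2]
      congr 1
      have : (i : ℕ) + 1 + max k (n + 1 - 1 - k - (p + 1)) = ((i:ℕ) + max k (n - 1 - k - p)) + 1 := by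
        omega
      apply congrArg
      exact Fin.ext this
    · rw [dif_neg (by omega), dif_neg h2]

lemma mv_adj (k : ℕ) : ∀ (n p : ℕ), p < n → ∀ v : Fin n → ZMod 2,
    (ZcubeK k n).Adj v (mv k n p v) := by
  intro n
  induction n with
  | zero => omega
  | succ n ih =>
    intro p hp v
    match p with
    | 0 =>
      show (ZcubeK k (n+1)).Adj v (mv k (n+1) 0 v)
      refine Or.inr ⟨?_, Or.inl ?_⟩
      · have : mv k (n+1) 0 v 0 = v 0 + 1 := by simp [mv]
        rw [this]
        intro hc
        have := add_left_cancel (a := v 0) (b := (0:ZMod 2)) (c := 1) (by simpa using hc.symm)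
        exact one_ne_zero this.symm
      · funext i
        show mv k (n+1) 0 v i.succ = phiK k n (Fin.tail v) i
        simp only [mv, Fin.val_succ]
        rw [if_neg (by omega)]
        unfold phiK
        by_cases hnk : n ≤ k
        · rw [if_pos hnk, dif_neg (by omega)]
          rfl
        · rw [if_neg hnk]
          by_cases hn2k : n ≤ 2 * k
          · rw [if_pos hn2k]
            by_cases hc : (i:ℕ) < n - k ∧ k + (i:ℕ) < n
            · rw [dif_pos (by omega : 0 < (i:ℕ)+1 ∧ (i:ℕ)+1 ≤ 0+k ∧ (i:ℕ)+1+k < n+1), dif_pos hc]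
              have hmax : max k (n + 1 - 1 - k - 0) = k := by omega
              congr 1
              show v _ = v _
              apply congrArg
              apply Fin.ext
              show (i:ℕ) + 1 + max k (n + 1 - 1 - k - 0) = k + (i:ℕ) + 1
              omega
            · rw [dif_neg (by omega), dif_neg hc]
              rfl
          · rw [if_neg hn2k]
            by_cases hc : (i:ℕ) < k ∧ n - k + (i:ℕ) < n
            · rw [dif_pos (by omega : 0 < (i:ℕ)+1 ∧ (i:ℕ)+1 ≤ 0+k ∧ (i:ℕ)+1+k < n+1), dif_pos hc]
              congr 1
              show v _ = v _
              apply congrArg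
              apply Fin.ext
              show (i:ℕ) + 1 + max k (n + 1 - 1 - k - 0) = n - k + (i:ℕ) + 1
              omega
            · rw [dif_neg (by omega), dif_neg hc]
              rfl
    | (q+1) =>
      refine Or.inl ⟨?_, ?_⟩
      · simp [mv]
      · rw [mv_tail]
        exact ih q (by omega) (Fin.tail v)

end ZKproof
namespace ZKproof

def applyMoves (k : ℕ) {n : ℕ} (L : List ℕ) (v : Fin n → ZMod 2) : Fin n → ZMod 2 :=
  L.foldl (fun w p => mv k n p w) v

lemma applyMoves_nil (k : ℕ) {n : ℕ} (v : Fin n → ZMod 2) : applyMoves k [] v = v := rfl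

lemma applyMoves_cons (k : ℕ) {n : ℕ} (p : ℕ) (L : List ℕ) (v : Fin n → ZMod 2) :
    applyMoves k (p :: L) v = applyMoves k L (mv k n p v) := rfl

lemma applyMoves_append (k : ℕ) {n : ℕ} (L1 L2 : List ℕ) (v : Fin n → ZMod 2) :
    applyMoves k (L1 ++ L2) v = applyMoves k L2 (applyMoves k L1 v) :=
  List.foldl_append ..

lemma exists_walk (k n : ℕ) (L : List ℕ) (hL : ∀ p ∈ L, p < n) (v : Fin n → ZMod 2) :
    ∃ w : (ZcubeK k n).Walk v (applyMoves k L v), w.length = L.length := by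
  induction L generalizing v with
  | nil => exact ⟨SimpleGraph.Walk.nil, rfl⟩
  | cons p L ih =>
    obtain ⟨w, hw⟩ := ih (fun q hq => hL q (List.mem_cons_of_mem _ hq)) (mv k n p v)
    exact ⟨SimpleGraph.Walk.cons (mv_adj k n p (hL p (List.mem_cons_self)) v) w,
      by exact congrArg (· + 1) hw⟩

lemma dist_le_of_moves (k n : ℕ) (L : List ℕ) (hL : ∀ p ∈ L, p < n) (v u : Fin n → ZMod 2)
    (h : applyMoves k L v = u) : (ZcubeK k n).dist v u ≤ L.length := by
  subst h
  obtain ⟨w, hw⟩ := exists_walk k n L hL v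
  exact hw ▸ SimpleGraph.dist_le w

/-- effect vector of a crossing at position `p` executed with suffix value `t`. -/
def effv (k n p : ℕ) (t : Fin k → ZMod 2) : Fin n → ZMod 2 := fun i =>
  if (i : ℕ) = p then 1
  else if h : p < (i : ℕ) ∧ (i : ℕ) ≤ p + k ∧ (i : ℕ) + k < n then
    (if h2 : (i : ℕ) + max k (n - 1 - k - p) - (n - k) < k then
      t ⟨(i : ℕ) + max k (n - 1 - k - p) - (n - k), h2⟩ else 0)
  else 0

lemma effv_high (k n p : ℕ) (t : Fin k → ZMod 2) (hp : p < n - k) (i : Fin n)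
    (hi : n - k ≤ (i : ℕ)) : effv k n p t i = 0 := by
  unfold effv
  rw [if_neg (by omega), dif_neg (by omega)]

lemma mv_eq_add_effv (k n p : ℕ) (hp : p < n - k) (v : Fin n → ZMod 2) :
    mv k n p v = v + effv k n p (lastBits k n v) := by
  funext i
  show mv k n p v i = v i + effv k n p (lastBits k n v) i
  unfold mv effv
  by_cases h1 : (i : ℕ) = p
  · simp [h1]
  · rw [if_neg h1, if_neg h1]
    by_cases h2 : p < (i : ℕ) ∧ (i : ℕ) ≤ p + k ∧ (i : ℕ) + k < n
    · rw [dif_pos h2, dif_pos h2]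
      have hb : (i : ℕ) + max k (n - 1 - k - p) - (n - k) < k := by omega
      rw [dif_pos hb]
      congr 1
      unfold lastBits
      rw [dif_pos (by omega : n - k + ((i:ℕ) + max k (n - 1 - k - p) - (n - k)) < n)]
      apply congrArg
      apply Fin.ext
      show (i:ℕ) + max k (n - 1 - k - p) = n - k + ((i:ℕ) + max k (n - 1 - k - p) - (n - k))
      omega
    · rw [dif_neg h2, dif_neg h2, add_zero]

lemma lastBits_mv_low (k n p : ℕ) (hp : p < n - k) (v : Fin n → ZMod 2) :
    lastBits k n (mv k n p v) = lastBits k n v := by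
  funext j
  unfold lastBits
  by_cases h : n - k + (j : ℕ) < n
  · rw [dif_pos h, dif_pos h]
    show mv k n p v _ = v _
    unfold mv
    have hv : ((⟨n - k + (j:ℕ), h⟩ : Fin n) : ℕ) = n - k + (j:ℕ) := rfl
    rw [if_neg (by rw [hv]; omega), dif_neg (by rw [hv]; omega)]
  · rw [dif_neg h, dif_neg h]

lemma mv_high_flip (k n p : ℕ) (hp1 : n - k ≤ p) (v : Fin n → ZMod 2) (i : Fin n) :
    mv k n p v i = if (i : ℕ) = p then v i + 1 else v i := by
  unfold mv
  by_cases h1 : (i : ℕ) = p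
  · simp [h1]
  · rw [if_neg h1, if_neg h1, dif_neg (by omega)]

end ZKproof
namespace ZKproof

/-- non-dependent `Fin.cons` specialised to binary strings. -/
def consZ {k : ℕ} (α : ZMod 2) (x : Fin k → ZMod 2) : Fin (k + 1) → ZMod 2 := Fin.cons α x

@[simp] lemma consZ_zero {k : ℕ} (α : ZMod 2) (x : Fin k → ZMod 2) : consZ α x 0 = α := rfl

@[simp] lemma consZ_succ {k : ℕ} (α : ZMod 2) (x : Fin k → ZMod 2) (j : Fin k) :
    consZ α x j.succ = x j := rfl

lemma consZ_self_tail {k : ℕ} (z : Fin (k + 1) → ZMod 2) : consZ (z 0) (Fin.tail z) = z :=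
  Fin.cons_self_tail z

/-- adjacency in the hypercube `Q_k` (differ in exactly one coordinate). -/
def Sadj {k : ℕ} (x y : Fin k → ZMod 2) : Prop :=
  ∃ j : Fin k, y = Function.update x j (x j + 1)

lemma zmod2_resolve {α β : ZMod 2} (h : α ≠ β) : β = α + 1 := by
  revert h; revert α β; decide

lemma zmod2_add_self_one (α : ZMod 2) : α + 1 + 1 = α := by revert α; decide

lemma zmod2_self_add (α : ZMod 2) : α + α = 0 := by revert α; decide

lemma zmod2_ne_add_one (α : ZMod 2) : α ≠ α + 1 := by revert α; decide

lemma Sadj.symm' {k : ℕ} {x y : Fin k → ZMod 2} (h : Sadj x y) : Sadj y x := by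
  obtain ⟨j, hj⟩ := h
  refine ⟨j, ?_⟩
  subst hj
  funext i
  by_cases hij : i = j
  · subst hij
    simp [Function.update_self, zmod2_add_self_one]
  · simp [Function.update_of_ne hij]

/-- parity of a binary string. -/
def par {k : ℕ} (x : Fin k → ZMod 2) : ZMod 2 := ∑ j, x j

lemma par_update {k : ℕ} (x : Fin k → ZMod 2) (j : Fin k) :
    par (Function.update x j (x j + 1)) = par x + 1 := by
  unfold par
  rw [Finset.sum_update_of_mem (Finset.mem_univ j)]
  have h2 : x j + ∑ i ∈ Finset.univ \ {j}, x i = ∑ i, x i := by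
    rw [Finset.sdiff_singleton_eq_erase]
    exact Finset.add_sum_erase _ _ (Finset.mem_univ j)
  rw [← h2]
  ring

lemma par_cons {k : ℕ} (α : ZMod 2) (x : Fin k → ZMod 2) :
    par (consZ α x) = α + par x := by
  unfold par consZ
  rw [Fin.sum_univ_succ]
  simp

lemma Sadj.par_eq {k : ℕ} {x y : Fin k → ZMod 2} (h : Sadj x y) : par y = par x + 1 := by
  obtain ⟨j, hj⟩ := h; subst hj; exact par_update x j

lemma sadj_cons_lift {k : ℕ} (α : ZMod 2) {x y : Fin k → ZMod 2} (h : Sadj x y) :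
    Sadj (consZ α x) (consZ α y) := by
  obtain ⟨j, hj⟩ := h
  refine ⟨j.succ, ?_⟩
  rw [hj]
  unfold consZ
  simp only [Fin.cons_succ]
  exact Fin.cons_update ..

lemma sadj_cross {k : ℕ} (α β : ZMod 2) (hab : α ≠ β) (x : Fin k → ZMod 2) :
    Sadj (consZ α x) (consZ β x) := by
  refine ⟨0, ?_⟩
  unfold consZ
  rw [Fin.update_cons_zero]
  rw [zmod2_resolve hab]
  simp

/-- A spanning walk: a walk from `a` to `b` visiting every vertex of `Q_k`,
with at most `m` vertices. -/
def SpanWalk {k : ℕ} (a b : Fin k → ZMod 2) (m : ℕ) : Prop :=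
  ∃ l : List (Fin k → ZMod 2), l.IsChain Sadj ∧ l.head? = some a ∧ l.getLast? = some b ∧
    (∀ z : Fin k → ZMod 2, z ∈ l) ∧ l.length ≤ m

lemma chain'_map_cons {k : ℕ} (α : ZMod 2) (l : List (Fin k → ZMod 2))
    (h : l.IsChain Sadj) : (l.map (consZ α)).IsChain Sadj :=
  List.isChain_map_of_isChain (consZ α) (fun _ _ hxy => sadj_cons_lift α hxy) h

lemma grayOdd : ∀ (k : ℕ) (a b : Fin k → ZMod 2), par a + par b = 1 → SpanWalk a b (2 ^ k) := by
  intro k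
  induction k with
  | zero =>
    intro a b h
    exfalso
    have ha : par a = 0 := by unfold par; simp
    have hb : par b = 0 := by unfold par; simp
    rw [ha, hb] at h
    exact absurd h (by decide)
  | succ k ih =>
    intro a b h
    have hae : a = consZ (a 0) (Fin.tail a) := (consZ_self_tail a).symm
    have hbe : b = consZ (b 0) (Fin.tail b) := (consZ_self_tail b).symm
    have hpa : par a = a 0 + par (Fin.tail a) := by conv_lhs => rw [hae, par_cons]
    have hpb : par b = b 0 + par (Fin.tail b) := by conv_lhs => rw [hbe, par_cons]
    have hpow : 2 ^ (k + 1) = 2 ^ k + 2 ^ k := by rw [pow_succ]; omega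
    by_cases hab : a 0 = b 0
    · -- same copy
      have hpar' : par (Fin.tail a) + par (Fin.tail b) = 1 := by
        have h5 : a 0 + par (Fin.tail a) + (a 0 + par (Fin.tail b)) = 1 := by
          rw [← hpa, hab, ← hpb]; exact h
        calc par (Fin.tail a) + par (Fin.tail b)
            = a 0 + a 0 + (par (Fin.tail a) + par (Fin.tail b)) := by
              rw [zmod2_self_add, zero_add]
        _ = a 0 + par (Fin.tail a) + (a 0 + par (Fin.tail b)) := by ring
        _ = 1 := h5
      obtain ⟨l', hc', hh', hl', hcov', hlen'⟩ := ih (Fin.tail a) (Fin.tail b) hpar'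
      match l', hc', hh', hl', hcov', hlen' with
      | [], _, hh', _, _, _ => exact absurd hh' (by simp)
      | [x], _, hh', hl', hcov', _ =>
        exfalso
        have hx1 : x = Fin.tail a := by simpa using hh'
        have hx2 : x = Fin.tail b := by simpa using hl'
        rw [← hx1, ← hx2, zmod2_self_add] at hpar'
        exact absurd hpar' (by decide)
      | x :: c' :: rest, hc', hh', hl', hcov', hlen' =>
        have hx : x = Fin.tail a := by simpa using hh'
        subst hx
        have hac : Sadj (Fin.tail a) c' := (List.isChain_cons_cons.mp hc').1
        have hparc : par (Fin.tail a) + par c' = 1 := by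
          rw [hac.par_eq, ← add_assoc, zmod2_self_add, zero_add]
        obtain ⟨lm, hcm, hhm, hlm, hcovm, hlenm⟩ := ih (Fin.tail a) c' hparc
        have hlmne : lm ≠ [] := by rintro rfl; simp at hhm
        have hmapne : lm.map (consZ (a 0 + 1)) ≠ [] := by simpa using hlmne
        have hmapne2 : (c' :: rest).map (consZ (a 0)) ≠ [] := by simp
        refine ⟨consZ (a 0) (Fin.tail a) ::
            (lm.map (consZ (a 0 + 1)) ++ (c' :: rest).map (consZ (a 0))),
          ?_, ?_, ?_, ?_, ?_⟩
        · rw [List.isChain_cons]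
          constructor
          · intro y hy
            rw [List.head?_append_of_ne_nil _ hmapne, List.head?_map, hhm] at hy
            simp only [Option.map_some, Option.mem_def, Option.some.injEq] at hy
            rw [← hy]
            exact sadj_cross _ _ (zmod2_ne_add_one _) _
          · rw [List.isChain_append]
            refine ⟨chain'_map_cons _ _ hcm, chain'_map_cons _ _ (List.isChain_cons_cons.mp hc').2, ?_⟩
            intro p hp q hq
            rw [List.getLast?_map, hlm] at hp
            simp only [Option.mem_def, Option.map_some, Option.some.injEq] at hp
            simp only [List.map_cons, List.head?_cons, Option.mem_def, Option.some.injEq] at hq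
            rw [← hp, ← hq]
            exact sadj_cross _ _ (Ne.symm (zmod2_ne_add_one _)) _
        · rw [List.head?_cons, ← hae]
        · rw [show (consZ (a 0) (Fin.tail a) ::
              (lm.map (consZ (a 0 + 1)) ++ (c' :: rest).map (consZ (a 0))))
            = (consZ (a 0) (Fin.tail a) :: lm.map (consZ (a 0 + 1)))
              ++ (c' :: rest).map (consZ (a 0)) by simp]
          rw [List.getLast?_append_of_ne_nil _ hmapne2, List.getLast?_map]
          have h7 : (c' :: rest).getLast? = some (Fin.tail b) := by
            rwa [List.getLast?_cons_cons] at hl'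
          rw [h7]
          simp only [Option.map_some, Option.some.injEq]
          rw [hab, ← hbe]
        · intro z
          have hzt : z = consZ (z 0) (Fin.tail z) := (consZ_self_tail z).symm
          by_cases hz0 : z 0 = a 0
          · have h8 : Fin.tail z ∈ Fin.tail a :: c' :: rest := hcov' (Fin.tail z)
            rcases List.mem_cons.mp h8 with h1 | h1
            · apply List.mem_cons.mpr
              left
              rw [hzt, hz0, h1]
            · apply List.mem_cons.mpr
              right
              apply List.mem_append_right
              rw [hzt, hz0]
              exact List.mem_map_of_mem h1
          · have hz1 : z 0 = a 0 + 1 := zmod2_resolve (fun hc => hz0 hc.symm)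
            apply List.mem_cons.mpr
            right
            apply List.mem_append_left
            rw [hzt, hz1]
            exact List.mem_map_of_mem (hcovm (Fin.tail z))
        · simp only [List.length_cons, List.length_append, List.length_map]
          simp only [List.length_cons] at hlen' hlenm
          omega
    · -- different copies
      have hb0 : b 0 = a 0 + 1 := zmod2_resolve hab
      have hpar0 : par (Fin.tail a) + par (Fin.tail b) = 0 := by
        have h5 : a 0 + par (Fin.tail a) + (a 0 + 1 + par (Fin.tail b)) = 1 := by
          rw [← hpa, ← hb0, ← hpb]; exact h
        have h6 : par (Fin.tail a) + par (Fin.tail b) + 1 = 1 := by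
          calc par (Fin.tail a) + par (Fin.tail b) + 1
              = a 0 + a 0 + (par (Fin.tail a) + par (Fin.tail b) + 1) := by
                rw [zmod2_self_add, zero_add]
          _ = a 0 + par (Fin.tail a) + (a 0 + 1 + par (Fin.tail b)) := by ring
          _ = 1 := h5
        have h6' : par (Fin.tail a) + par (Fin.tail b) + 1 = 0 + 1 := by rw [zero_add]; exact h6
        exact add_right_cancel h6'
      by_cases hk : k = 0
      · -- k = 0 : the two tails are equal, single cross edge
        subst hk
        have hteq : Fin.tail a = Fin.tail b := by
          funext i; exact absurd i.isLt (by omega)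
        refine ⟨[a, b], ?_, rfl, rfl, ?_, by norm_num⟩
        · refine List.isChain_cons_cons.mpr ⟨?_, List.isChain_singleton _⟩
          rw [hae, hbe, ← hteq]
          exact sadj_cross _ _ hab _
        · intro z
          have hzt : z = consZ (z 0) (Fin.tail z) := (consZ_self_tail z).symm
          have hzteq : Fin.tail z = Fin.tail a := by
            funext i; exact absurd i.isLt (by omega)
          by_cases hz0 : z 0 = a 0
          · have hza : z = a := by rw [hzt, hz0, hzteq, ← hae]
            simp [hza]
          · have hz1 : z 0 = a 0 + 1 := zmod2_resolve (fun hc => hz0 hc.symm)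
            have hzb : z = b := by rw [hzt, hz1, hzteq, hteq, ← hb0, ← hbe]
            simp [hzb]
      · -- k ≥ 1
        have hkpos : 0 < k := Nat.pos_of_ne_zero hk
        set j0 : Fin k := ⟨0, hkpos⟩ with hj0
        set c' := Function.update (Fin.tail b) j0 (Fin.tail b j0 + 1) with hc'def
        have hparac : par (Fin.tail a) + par c' = 1 := by
          rw [hc'def, par_update, ← add_assoc, hpar0, zero_add]
        have hparcb : par c' + par (Fin.tail b) = 1 := by
          rw [hc'def, par_update]
          rw [add_comm (par (Fin.tail b)) 1, add_assoc, zmod2_self_add, add_zero]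
        obtain ⟨l1, hc1, hh1, hl1, hcov1, hlen1⟩ := ih (Fin.tail a) c' hparac
        obtain ⟨l2, hc2, hh2, hl2, hcov2, hlen2⟩ := ih c' (Fin.tail b) hparcb
        have hl1ne : l1 ≠ [] := by rintro rfl; simp at hh1
        have hl2ne : l2 ≠ [] := by rintro rfl; simp at hh2
        have hm1ne : l1.map (consZ (a 0)) ≠ [] := by simpa using hl1ne
        have hm2ne : l2.map (consZ (b 0)) ≠ [] := by simpa using hl2ne
        refine ⟨l1.map (consZ (a 0)) ++ l2.map (consZ (b 0)), ?_, ?_, ?_, ?_, ?_⟩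
        · rw [List.isChain_append]
          refine ⟨chain'_map_cons _ _ hc1, chain'_map_cons _ _ hc2, ?_⟩
          intro p hp q hq
          rw [List.getLast?_map, hl1] at hp
          rw [List.head?_map, hh2] at hq
          simp only [Option.mem_def, Option.map_some, Option.some.injEq] at hp hq
          rw [← hp, ← hq]
          exact sadj_cross _ _ hab _
        · rw [List.head?_append_of_ne_nil _ hm1ne, List.head?_map, hh1]
          simp only [Option.map_some, Option.some.injEq]
          exact hae.symm
        · rw [List.getLast?_append_of_ne_nil _ hm2ne, List.getLast?_map, hl2]
          simp only [Option.map_some, Option.some.injEq]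
          exact hbe.symm
        · intro z
          have hzt : z = consZ (z 0) (Fin.tail z) := (consZ_self_tail z).symm
          by_cases hz0 : z 0 = a 0
          · apply List.mem_append_left
            rw [hzt, hz0]
            exact List.mem_map_of_mem (hcov1 (Fin.tail z))
          · apply List.mem_append_right
            have hzb : z 0 = b 0 := by
              rw [hb0]; exact zmod2_resolve (fun hc => hz0 hc.symm)
            rw [hzt, hzb]
            exact List.mem_map_of_mem (hcov2 (Fin.tail z))
        · simp only [List.length_append, List.length_map]
          omega

lemma graySpan (k : ℕ) (a b : Fin k → ZMod 2) : SpanWalk a b (2 ^ k + 1) := by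
  by_cases hpar : par a + par b = 1
  · obtain ⟨l, h1, h2, h3, h4, h5⟩ := grayOdd k a b hpar
    exact ⟨l, h1, h2, h3, h4, by omega⟩
  · by_cases hk : k = 0
    · subst hk
      have hab : a = b := by funext i; exact absurd i.isLt (by omega)
      subst hab
      refine ⟨[a], List.isChain_singleton _, rfl, rfl, ?_, by simp⟩
      intro z
      have hz : z = a := by funext i; exact absurd i.isLt (by omega)
      simp [hz]
    · have hkpos : 0 < k := Nat.pos_of_ne_zero hk
      set j0 : Fin k := ⟨0, hkpos⟩ with hj0
      set c := Function.update b j0 (b j0 + 1) with hcdef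
      have hparac : par a + par c = 1 := by
        rw [hcdef, par_update]
        have h0 : par a + par b = 0 := by
          rcases (by decide : ∀ z : ZMod 2, z = 0 ∨ z = 1) (par a + par b) with h | h
          · exact h
          · exact absurd h hpar
        rw [← add_assoc, h0, zero_add]
      obtain ⟨l, h1, h2, h3, h4, h5⟩ := grayOdd k a c hparac
      have hlne : l ≠ [] := by rintro rfl; simp at h2
      refine ⟨l ++ [b], ?_, ?_, ?_, ?_, ?_⟩
      · rw [List.isChain_append]
        refine ⟨h1, List.isChain_singleton _, ?_⟩
        intro p hp q hq
        rw [h3] at hp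
        simp only [Option.mem_def, Option.some.injEq, List.head?_cons] at hp hq
        rw [← hp, ← hq]
        exact Sadj.symm' ⟨j0, hcdef⟩
      · rw [List.head?_append_of_ne_nil _ hlne]; exact h2
      · rw [List.getLast?_append_of_ne_nil _ (by simp)]; rfl
      · intro z
        exact List.mem_append_left _ (h4 z)
      · simp only [List.length_append, List.length_cons, List.length_nil]
        omega

end ZKproof
namespace ZKproof

lemma zmod2_ne_zero {z : ZMod 2} (h : z ≠ 0) : z = 1 := by revert h; revert z; decide

lemma zmod2_cancel (a b : ZMod 2) : a + (b + a) = b := by revert a b; decide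

lemma zmod2_of_add_zero {a b : ZMod 2} (h : a + b = 0) : b = a := by
  revert h; revert a b; decide

def effSum (k n : ℕ) (cs : List (ℕ × (Fin k → ZMod 2))) : Fin n → ZMod 2 :=
  (cs.map (fun c => effv k n c.1 c.2)).sum

lemma effSum_nil (k n : ℕ) : effSum k n [] = 0 := rfl

lemma effSum_cons (k n : ℕ) (c : ℕ × (Fin k → ZMod 2)) (cs : List (ℕ × (Fin k → ZMod 2))) :
    effSum k n (c :: cs) = effv k n c.1 c.2 + effSum k n cs := by
  unfold effSum
  rw [List.map_cons, List.sum_cons]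

lemma greedy (k n : ℕ) (hkn : k ≤ n) : ∀ (fuel q : ℕ), n - k - q ≤ fuel →
    ∀ d : Fin n → ZMod 2, (∀ i : Fin n, ((i : ℕ) < q ∨ n - k ≤ (i : ℕ)) → d i = 0) →
    ∃ cs : List (ℕ × (Fin k → ZMod 2)), (∀ c ∈ cs, c.1 < n - k) ∧ effSum k n cs = d ∧
      cs.length * (k + 1) ≤ (n - k - q) + k := by
  intro fuel
  induction fuel with
  | zero =>
    intro q hfuel d hd
    -- q ≥ n - k, so d = 0
    refine ⟨[], by simp, ?_, by simp⟩
    rw [effSum_nil]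
    funext i
    exact (hd i (by omega)).symm
  | succ fuel ih =>
    intro q hfuel d hd
    by_cases hdz : d = 0
    · exact ⟨[], by simp, by rw [effSum_nil, hdz], by simp⟩
    · have hex : ∃ m : ℕ, ∃ hm : m < n, d ⟨m, hm⟩ ≠ 0 := by
        by_contra hc
        push_neg at hc
        apply hdz
        funext i
        have h0 := hc i.val i.isLt
        simpa [Fin.eta] using h0
      have hex' : ∃ m : ℕ, ∃ hm : m < n, d ⟨m, hm⟩ ≠ 0 := hex
      classical
      set p := Nat.find hex' with hpdef
      obtain ⟨hpn, hdp⟩ := Nat.find_spec hex'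
      have hpmin : ∀ m < p, ∀ hm : m < n, d ⟨m, hm⟩ = 0 := by
        intro m hm hmn
        by_contra hc
        exact absurd ⟨hmn, hc⟩ (Nat.find_min hex' hm)
      have hqp : q ≤ p := by
        by_contra hc
        exact hdp (hd ⟨p, hpn⟩ (Or.inl (show p < q by omega)))
      have hpnk : p < n - k := by
        by_contra hc
        exact hdp (hd ⟨p, hpn⟩ (Or.inr (show n - k ≤ p by omega)))
      set shift := max k (n - 1 - k - p) with hshift
      set t : Fin k → ZMod 2 := fun j =>
        if h : n - k + (j : ℕ) - shift < n then d ⟨n - k + (j : ℕ) - shift, h⟩ else 0 with ht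
      set d' : Fin n → ZMod 2 := fun i => d i + effv k n p t i with hd'
      have heffp : effv k n p t ⟨p, hpn⟩ = 1 := by
        unfold effv; rw [if_pos rfl]
      have hwin : ∀ i : Fin n, p < (i : ℕ) → (i : ℕ) ≤ p + k → (i : ℕ) + k < n →
          effv k n p t i = d i := by
        intro i h1 h2 h3
        unfold effv
        rw [if_neg (by omega), dif_pos ⟨h1, h2, h3⟩, dif_pos (by omega)]
        rw [ht]
        simp only
        have hback : n - k + ((i : ℕ) + max k (n - 1 - k - p) - (n - k)) - shift = (i : ℕ) := by
          rw [hshift]; omega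
        rw [dif_pos (by rw [hback]; omega : n - k + ((i : ℕ) + max k (n - 1 - k - p) - (n - k)) - shift < n)]
        apply congrArg
        exact Fin.ext hback
      have hd'zero : ∀ i : Fin n, ((i : ℕ) < min (p + k + 1) (n - k) ∨ n - k ≤ (i : ℕ)) →
          d' i = 0 := by
        intro i hi
        rw [hd']
        simp only
        rcases hi with hi | hi
        · by_cases h1 : (i : ℕ) < p
          · have hdi : d i = 0 := by
              have h0 := hpmin i.val h1 i.isLt
              simpa [Fin.eta] using h0
            rw [hdi]
            unfold effv
            rw [if_neg (by omega), dif_neg (by omega), add_zero]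
          · by_cases h2 : (i : ℕ) = p
            · have hip : i = ⟨p, hpn⟩ := Fin.ext h2
              rw [hip, heffp, zmod2_ne_zero hdp, zmod2_self_add]
            · have h3 : p < (i : ℕ) := by omega
              rw [hwin i h3 (by omega) (by omega), zmod2_self_add]
        · rw [hd i (Or.inr hi), effv_high k n p t hpnk i hi, add_zero]
      by_cases hd'z : d' = 0
      · refine ⟨[(p, t)], by simp [hpnk], ?_, ?_⟩
        · rw [effSum_cons, effSum_nil, add_zero]
          funext i
          have := congrFun hd'z i
          rw [hd'] at this
          simp only at this
          exact zmod2_of_add_zero this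
        · have h1 : ([(p, t)] : List (ℕ × (Fin k → ZMod 2))).length = 1 := rfl
          rw [h1, one_mul]
          omega
      · have hminlt : min (p + k + 1) (n - k) < n - k := by
          by_contra hc
          push_neg at hc
          apply hd'z
          funext i
          show d' i = (0 : Fin n → ZMod 2) i
          rw [Pi.zero_apply]
          apply hd'zero
          by_cases hh : (i : ℕ) < n - k
          · exact Or.inl (by omega)
          · exact Or.inr (by omega)
        obtain ⟨cs', hcs1, hcs2, hcs3⟩ := ih (min (p + k + 1) (n - k)) (by omega) d' hd'zero
        refine ⟨(p, t) :: cs', ?_, ?_, ?_⟩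
        · intro c hc
          rcases List.mem_cons.mp hc with h | h
          · rw [h]; exact hpnk
          · exact hcs1 c h
        · rw [effSum_cons, hcs2]
          funext i
          rw [hd']
          simp only [Pi.add_apply]
          exact zmod2_cancel _ _
        · have hmul : ((p, t) :: cs').length * (k + 1) = cs'.length * (k + 1) + (k + 1) := by
            simp [List.length_cons]; ring
          rw [hmul]
          omega

end ZKproof
namespace ZKproof

lemma effSum_filter (k n : ℕ) (P : ℕ × (Fin k → ZMod 2) → Bool)
    (cs : List (ℕ × (Fin k → ZMod 2))) :
    effSum k n cs = effSum k n (cs.filter P) + effSum k n (cs.filter (fun c => ! P c)) := by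
  induction cs with
  | nil => simp [effSum_nil]
  | cons c cs ih =>
    rw [effSum_cons]
    by_cases h : P c
    · rw [List.filter_cons_of_pos h, List.filter_cons_of_neg (by simp [h]), effSum_cons, ih]
      ring
    · rw [List.filter_cons_of_neg (by simp [h]),
        List.filter_cons_of_pos (by simp [h]), effSum_cons, ih]
      ring

lemma batch (k n : ℕ) (hkn : k ≤ n) :
    ∀ (cs : List (ℕ × (Fin k → ZMod 2))) (v : Fin n → ZMod 2),
    (∀ c ∈ cs, c.2 = lastBits k n v) → (∀ c ∈ cs, c.1 < n - k) →
    applyMoves k (cs.map Prod.fst) v = v + effSum k n cs ∧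
      lastBits k n (applyMoves k (cs.map Prod.fst) v) = lastBits k n v := by
  intro cs
  induction cs with
  | nil => intro v _ _; constructor
           · rw [effSum_nil, add_zero]; rfl
           · rfl
  | cons c cs ih =>
    intro v hσ hpos
    have hc1 : c.1 < n - k := hpos c (List.mem_cons_self)
    have hc2 : c.2 = lastBits k n v := hσ c (List.mem_cons_self)
    have hmv : mv k n c.1 v = v + effv k n c.1 c.2 := by
      rw [hc2]; exact mv_eq_add_effv k n c.1 hc1 v
    have hsuf : lastBits k n (mv k n c.1 v) = lastBits k n v := lastBits_mv_low k n c.1 hc1 v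
    have happ : applyMoves k ((c :: cs).map Prod.fst) v
        = applyMoves k (cs.map Prod.fst) (mv k n c.1 v) := rfl
    obtain ⟨ih1, ih2⟩ := ih (mv k n c.1 v)
      (fun c' hc' => by rw [hσ c' (List.mem_cons_of_mem _ hc'), hsuf])
      (fun c' hc' => hpos c' (List.mem_cons_of_mem _ hc'))
    constructor
    · rw [happ, ih1, hmv, effSum_cons]
      ring
    · rw [happ, ih2, hsuf]

lemma interleave (k n : ℕ) (hkn : k ≤ n) :
    ∀ (l : List (Fin k → ZMod 2)) (cs : List (ℕ × (Fin k → ZMod 2))) (v : Fin n → ZMod 2)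
    (b : Fin k → ZMod 2),
    l.IsChain Sadj → l.head? = some (lastBits k n v) → l.getLast? = some b →
    (∀ c ∈ cs, c.1 < n - k ∧ c.2 ∈ l) →
    ∃ L : List ℕ, (∀ p ∈ L, p < n) ∧ L.length ≤ cs.length + (l.length - 1) ∧
      (∀ i : Fin n, (i : ℕ) < n - k → applyMoves k L v i = v i + effSum k n cs i) ∧
      lastBits k n (applyMoves k L v) = b := by
  intro l
  induction l with
  | nil => intro cs v b _ hh; simp at hh
  | cons σ rest ih =>
    intro cs v b hchain hhead hlast hcs
    have hσ : σ = lastBits k n v := by simpa using hhead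
    match rest, hchain, hlast with
    | [], _, hlast =>
      have hb : σ = b := by simpa using hlast
      obtain ⟨h1, h2⟩ := batch k n hkn cs v
        (fun c hc => by
          have := (hcs c hc).2
          simp only [List.mem_singleton] at this
          rw [this, hσ])
        (fun c hc => (hcs c hc).1)
      refine ⟨cs.map Prod.fst, ?_, ?_, ?_, ?_⟩
      · intro p hp
        obtain ⟨c, hc, rfl⟩ := List.mem_map.mp hp
        have := (hcs c hc).1
        omega
      · simp
      · intro i _
        rw [h1]; rfl
      · rw [h2, ← hσ, hb]
    | σ' :: rest', hchain, hlast =>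
      have hSadj : Sadj σ σ' := (List.isChain_cons_cons.mp hchain).1
      set cs1 := cs.filter (fun c => decide (c.2 = σ)) with hcs1
      set cs2 := cs.filter (fun c => ! decide (c.2 = σ)) with hcs2
      obtain ⟨h1, h2⟩ := batch k n hkn cs1 v
        (fun c hc => by
          have h9 := List.of_mem_filter hc
          simp only [decide_eq_true_eq] at h9
          rw [h9, hσ])
        (fun c hc => (hcs c (List.mem_of_mem_filter hc)).1)
      set v1 := applyMoves k (cs1.map Prod.fst) v with hv1
      obtain ⟨j, hj⟩ := hSadj
      set q := n - k + (j : ℕ) with hq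
      have hqn : q < n := by omega
      set v2 := mv k n q v1 with hv2
      have hv2low : ∀ i : Fin n, (i : ℕ) < n - k → v2 i = v1 i := by
        intro i hi
        rw [hv2, mv_high_flip k n q (by omega) v1, if_neg (by omega)]
      have hv2suf : lastBits k n v2 = σ' := by
        funext m
        rw [hj]
        unfold lastBits
        rw [dif_pos (by omega : n - k + (m : ℕ) < n)]
        rw [hv2, mv_high_flip k n q (by omega) v1]
        by_cases hmj : m = j
        · subst hmj
          rw [if_pos rfl, Function.update_self]
          have : v1 ⟨n - k + (m : ℕ), by omega⟩ = lastBits k n v1 m := by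
            unfold lastBits
            rw [dif_pos]
          rw [this, h2, ← hσ]
        · rw [if_neg (by
            intro hcon
            apply hmj
            apply Fin.ext
            have hcon' : n - k + (m : ℕ) = n - k + (j : ℕ) := hcon
            omega)]
          rw [Function.update_of_ne hmj]
          have : v1 ⟨n - k + (m : ℕ), by omega⟩ = lastBits k n v1 m := by
            unfold lastBits
            rw [dif_pos]
          rw [this, h2, ← hσ]
      have hlast' : (σ' :: rest').getLast? = some b := by
        rwa [List.getLast?_cons_cons] at hlast
      obtain ⟨L2, hL2pos, hL2len, hL2low, hL2suf⟩ := ih cs2 v2 b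
        (List.isChain_cons_cons.mp hchain).2 (by rw [hv2suf]; rfl) hlast'
        (fun c hc => by
          refine ⟨(hcs c (List.mem_of_mem_filter hc)).1, ?_⟩
          have hmem := (hcs c (List.mem_of_mem_filter hc)).2
          have hne : ¬ (c.2 = σ) := by
            have := List.of_mem_filter hc
            simpa using this
          rcases List.mem_cons.mp hmem with h | h
          · exact absurd h hne
          · exact h)
      refine ⟨cs1.map Prod.fst ++ q :: L2, ?_, ?_, ?_, ?_⟩
      · intro p hp
        rcases List.mem_append.mp hp with h | h
        · obtain ⟨c, hc, rfl⟩ := List.mem_map.mp h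
          have := (hcs c (List.mem_of_mem_filter hc)).1
          omega
        · rcases List.mem_cons.mp h with h | h
          · omega
          · exact hL2pos p h
      · have hsplit : cs.length = cs1.length + cs2.length :=
          List.length_eq_length_filter_add _
        simp only [List.length_append, List.length_map, List.length_cons]
        simp only [List.length_cons] at hL2len ⊢
        omega
      · intro i hi
        have happ : applyMoves k (cs1.map Prod.fst ++ q :: L2) v = applyMoves k L2 v2 := by
          rw [applyMoves_append, applyMoves_cons, ← hv1, ← hv2]
        rw [happ, hL2low i hi, hv2low i hi, h1]
        have hsum : effSum k n cs = effSum k n cs1 + effSum k n cs2 :=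
          effSum_filter k n _ cs
        rw [hsum]
        simp only [Pi.add_apply]
        ring
      · have happ : applyMoves k (cs1.map Prod.fst ++ q :: L2) v = applyMoves k L2 v2 := by
          rw [applyMoves_append, applyMoves_cons, ← hv1, ← hv2]
        rw [happ, hL2suf]

end ZKproof
namespace ZKproof

lemma zmod2_cancel' (a b : ZMod 2) : a + (a + b) = b := by revert a b; decide

lemma mv_all_flip (k n p : ℕ) (hnk : n ≤ k) (v : Fin n → ZMod 2) (i : Fin n) :
    mv k n p v i = if (i : ℕ) = p then v i + 1 else v i := by
  unfold mv
  by_cases h1 : (i : ℕ) = p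
  · simp [h1]
  · rw [if_neg h1, if_neg h1, dif_neg (by omega)]

lemma flips (k n : ℕ) (hnk : n ≤ k) : ∀ (M : List (Fin n)), M.Nodup →
    ∀ v : Fin n → ZMod 2, ∀ i : Fin n,
    applyMoves k (M.map Fin.val) v i = if i ∈ M then v i + 1 else v i := by
  intro M
  induction M with
  | nil => intro _ v i; simp [applyMoves_nil]
  | cons j M ih =>
    intro hnd v i
    have hjM : j ∉ M := (List.nodup_cons.mp hnd).1
    have happ : applyMoves k ((j :: M).map Fin.val) v = applyMoves k (M.map Fin.val) (mv k n j.val v) := rfl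
    rw [happ, ih (List.nodup_cons.mp hnd).2 (mv k n j.val v) i]
    by_cases hij : i = j
    · subst hij
      rw [if_neg hjM, if_pos (List.mem_cons_self), mv_all_flip k n i.val hnk, if_pos rfl]
    · have hvv : mv k n j.val v i = v i := by
        rw [mv_all_flip k n j.val hnk, if_neg (fun hc => hij (Fin.ext hc))]
      by_cases hiM : i ∈ M
      · rw [if_pos hiM, if_pos (List.mem_cons_of_mem _ hiM), hvv]
      · rw [if_neg hiM, if_neg (by
          intro hc
          rcases List.mem_cons.mp hc with h | h
          · exact hij h
          · exact hiM h), hvv]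

lemma walk_bound (k n : ℕ) (x y : Fin n → ZMod 2) :
    ∃ w : (ZcubeK k n).Walk x y, w.length ≤ n / (k + 1) + 2 ^ k := by
  by_cases hkn : k ≤ n
  · -- main case
    set d : Fin n → ZMod 2 := fun i => if (i : ℕ) < n - k then x i + y i else 0 with hd
    obtain ⟨cs, hcs1, hcs2, hcs3⟩ := greedy k n hkn n 0 (by omega) d
      (by
        intro i hi
        rcases hi with hi | hi
        · omega
        · rw [hd]; simp only; rw [if_neg (by omega)])
    obtain ⟨l, hc, hh, hl, hcov, hlen⟩ := graySpan k (lastBits k n x) (lastBits k n y)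
    obtain ⟨L, hLpos, hLlen, hLlow, hLsuf⟩ := interleave k n hkn l cs x (lastBits k n y)
      hc hh hl (fun c hc' => ⟨hcs1 c hc', hcov c.2⟩)
    have happly : applyMoves k L x = y := by
      funext i
      by_cases hi : (i : ℕ) < n - k
      · rw [hLlow i hi, hcs2, hd]
        simp only
        rw [if_pos hi]
        exact zmod2_cancel' _ _
      · have h1 : lastBits k n (applyMoves k L x) ⟨(i : ℕ) - (n - k), by omega⟩
            = lastBits k n y ⟨(i : ℕ) - (n - k), by omega⟩ := by rw [hLsuf]
        unfold lastBits at h1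
        rw [dif_pos (by omega : n - k + ((i:ℕ) - (n - k)) < n),
          dif_pos (by omega : n - k + ((i:ℕ) - (n - k)) < n)] at h1
        have hieq : (⟨n - k + ((i:ℕ) - (n - k)), by omega⟩ : Fin n) = i :=
          Fin.ext (show n - k + ((i:ℕ) - (n - k)) = (i:ℕ) by omega)
        rwa [hieq] at h1
    obtain ⟨w, hw⟩ := exists_walk k n L hLpos x
    refine ⟨w.copy rfl happly, ?_⟩
    rw [SimpleGraph.Walk.length_copy, hw]
    have hcslen : cs.length ≤ n / (k + 1) := by
      rw [Nat.le_div_iff_mul_le (by omega : 0 < k + 1)]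
      omega
    calc L.length ≤ cs.length + (l.length - 1) := hLlen
    _ ≤ n / (k + 1) + 2 ^ k :=
        Nat.add_le_add hcslen (Nat.sub_le_iff_le_add.mpr hlen)
  · -- small case : n < k, all moves are flips
    push_neg at hkn
    set M : List (Fin n) := (List.finRange n).filter (fun i => decide (x i ≠ y i)) with hM
    have hnd : M.Nodup := (List.nodup_finRange n).filter _
    have happly : applyMoves k (M.map Fin.val) x = y := by
      funext i
      rw [flips k n (by omega) M hnd x i]
      by_cases hxy : x i = y i
      · rw [if_neg (by
          intro hc
          have := List.of_mem_filter hc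
          simp only [decide_eq_true_eq] at this
          exact this hxy), hxy]
      · rw [if_pos (by
          apply List.mem_filter.mpr
          exact ⟨List.mem_finRange i, by simp [hxy]⟩)]
        exact (zmod2_resolve hxy).symm
    obtain ⟨w, hw⟩ := exists_walk k n (M.map Fin.val) (by
      intro p hp
      obtain ⟨c, _, rfl⟩ := List.mem_map.mp hp
      exact c.isLt) x
    refine ⟨w.copy rfl happly, ?_⟩
    rw [SimpleGraph.Walk.length_copy, hw]
    have hMlen : M.length ≤ n := by
      calc M.length ≤ (List.finRange n).length := List.length_filter_le _ _
      _ = n := List.length_finRange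
    have hn2k : n ≤ 2 ^ k := by
      have := Nat.lt_two_pow_self (n := n)
      have hkk : 2 ^ n ≤ 2 ^ k := Nat.pow_le_pow_right (by omega) (by omega)
      omega
    calc (M.map Fin.val).length = M.length := List.length_map _
    _ ≤ 2 ^ k := le_trans hMlen hn2k
    _ ≤ n / (k + 1) + 2 ^ k := Nat.le_add_left _ _

end ZKproof
/-- for each fixed `k ≥ 0` and all `n ≥ 1`, the graph `Z_{n,k}` has
diameter at most `n/(k+1) + 2^k`. -/
theorem zcubeK_diam_upper (k n : ℕ) (hn : 1 ≤ n) :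
    ((ZcubeK k n).diam : ℝ) ≤ (n : ℝ) / (k + 1) + 2 ^ k := by
  set N := n / (k + 1) + 2 ^ k with hN
  have hediam : (ZcubeK k n).ediam ≤ (N : ℕ∞) := by
    apply SimpleGraph.ediam_le_of_edist_le
    intro u v
    obtain ⟨w, hw⟩ := ZKproof.walk_bound k n u v
    calc (ZcubeK k n).edist u v ≤ (w.length : ℕ∞) := SimpleGraph.Walk.edist_le w
    _ ≤ (N : ℕ∞) := by exact_mod_cast hw
  have hdiam : (ZcubeK k n).diam ≤ N := by
    have h1 := ENat.toNat_le_toNat hediam (by simp : (N : ℕ∞) ≠ ⊤)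
    exact h1
  calc ((ZcubeK k n).diam : ℝ) ≤ (N : ℝ) := by exact_mod_cast hdiam
  _ = ((n / (k + 1) : ℕ) : ℝ) + 2 ^ k := by rw [hN]; push_cast; ring
  _ ≤ (n : ℝ) / (k + 1) + 2 ^ k := by
      apply add_le_add_left
      have h2 : ((n / (k + 1) : ℕ) : ℝ) ≤ (n : ℝ) / ((k + 1 : ℕ) : ℝ) := Nat.cast_div_le
      calc ((n / (k + 1) : ℕ) : ℝ) ≤ (n : ℝ) / ((k + 1 : ℕ) : ℝ) := h2
      _ = (n : ℝ) / ((k : ℝ) + 1) := by push_cast; ring
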